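/- arXiv:1405.3034 — 4 statements merged into one kernel-verified Lean document; each statement's English description precedes it below -/
import Mathlib

section
/- Let the G-AMA map be T(Y) = C_λ(Y + τY⁻¹ − S) + S (entrywise clip), and suppose Y* is a fixed point of T with Y* ∈ S₊₊^p. If Y and Y* both lie in the set {Z : αI ⪯ Z ⪯ βI} along the segment joining them and 0 < τ < α², then ‖T(Y) − Y*‖_F ≤ γ‖Y − Y*‖_F with γ = max(|1 − τ/α²|, |1 − τ/β²|) < 1. -/
attribute [local instance] Matrix.frobeniusNormedAddCommGroup

/-- Clip operator. -/
noncomputable def clip (l x : ℝ) : ℝ := min (max x (-l)) l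

/-- The G-AMA map `T(Y) = C_λ(Y + τ Y⁻¹ − S) + S` (entrywise clip). -/
noncomputable def gamaMap {p : ℕ} (l τ : ℝ) (S Y : Matrix (Fin p) (Fin p) ℝ) :
    Matrix (Fin p) (Fin p) ℝ :=
  Matrix.of fun i j => clip l ((Y + τ • Y⁻¹ - S) i j) + S i j

open Matrix

lemma clip_lip (l x y : ℝ) : |clip l x - clip l y| ≤ |x - y| := by
  unfold clip
  calc |min (max x (-l)) l - min (max y (-l)) l|
      ≤ max |max x (-l) - max y (-l)| |l - l| := abs_min_sub_min_le_max _ _ _ _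
    _ ≤ |x - y| := by
        simp only [sub_self, abs_zero]
        exact max_le (abs_max_sub_max_le_abs _ _ _) (abs_nonneg _)

lemma frob_sq {p : ℕ} (A : Matrix (Fin p) (Fin p) ℝ) :
    ‖A‖ ^ 2 = ∑ i, ∑ j, (A i j) ^ 2 := by
  rw [Matrix.frobenius_norm_def, ← Real.rpow_natCast _ 2, ← Real.rpow_mul (by positivity)]
  norm_num

lemma frob_sq_trace {p : ℕ} (A : Matrix (Fin p) (Fin p) ℝ) :
    ‖A‖ ^ 2 = Matrix.trace (Aᵀ * A) := by
  rw [frob_sq, Matrix.trace]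
  simp only [Matrix.diag_apply, Matrix.mul_apply, Matrix.transpose_apply]
  rw [Finset.sum_comm]
  congr 1; ext i; congr 1; ext j; ring

lemma frob_mono {p : ℕ} (A B : Matrix (Fin p) (Fin p) ℝ)
    (h : ∀ i j, |A i j| ≤ |B i j|) : ‖A‖ ≤ ‖B‖ := by
  have h2 : ‖A‖ ^ 2 ≤ ‖B‖ ^ 2 := by
    rw [frob_sq, frob_sq]
    apply Finset.sum_le_sum; intro i _
    apply Finset.sum_le_sum; intro j _
    rw [← sq_abs (A i j), ← sq_abs (B i j)]
    exact pow_le_pow_left₀ (abs_nonneg _) (h i j) 2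
  nlinarith [norm_nonneg A, norm_nonneg B]

lemma frob_unitary_left {p : ℕ} (U M : Matrix (Fin p) (Fin p) ℝ)
    (hU : Uᵀ * U = 1) : ‖U * M‖ = ‖M‖ := by
  have h2 : ‖U * M‖ ^ 2 = ‖M‖ ^ 2 := by
    rw [frob_sq_trace, frob_sq_trace, Matrix.transpose_mul]
    rw [show Mᵀ * Uᵀ * (U * M) = Mᵀ * (Uᵀ * U) * M by noncomm_ring, hU, Matrix.mul_one]
  nlinarith [norm_nonneg (U * M), norm_nonneg M]

lemma frob_unitary_right {p : ℕ} (V M : Matrix (Fin p) (Fin p) ℝ)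
    (hV : V * Vᵀ = 1) : ‖M * V‖ = ‖M‖ := by
  have h2 : ‖M * V‖ ^ 2 = ‖M‖ ^ 2 := by
    rw [frob_sq_trace, frob_sq_trace, Matrix.transpose_mul]
    rw [show Vᵀ * Mᵀ * (M * V) = Vᵀ * (Mᵀ * M * V) by noncomm_ring,
      Matrix.trace_mul_comm, show Mᵀ * M * V * Vᵀ = Mᵀ * M * (V * Vᵀ) by noncomm_ring,
      hV, Matrix.mul_one]
  nlinarith [norm_nonneg (M * V), norm_nonneg M]

lemma frob_smul {p : ℕ} (c : ℝ) (M : Matrix (Fin p) (Fin p) ℝ) (hc : 0 ≤ c) :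
    ‖c • M‖ = c * ‖M‖ := by
  have h2 : ‖c • M‖ ^ 2 = (c * ‖M‖) ^ 2 := by
    rw [frob_sq, mul_pow, frob_sq]
    rw [Finset.mul_sum]
    congr 1 with i
    rw [Finset.mul_sum]
    congr 1 with j
    simp [Matrix.smul_apply, smul_eq_mul]
    ring
  have := norm_nonneg (c • M)
  have := norm_nonneg M
  nlinarith [mul_nonneg hc (norm_nonneg M)]

lemma eig_bounds {p : ℕ} {Y U : Matrix (Fin p) (Fin p) ℝ} {μ : Fin p → ℝ} {α β : ℝ}
    (hU1 : Uᵀ * U = 1) (hspec : Y = U * Matrix.diagonal μ * Uᵀ)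
    (h1 : (Y - α • (1 : Matrix (Fin p) (Fin p) ℝ)).PosSemidef)
    (h2 : (β • (1 : Matrix (Fin p) (Fin p) ℝ) - Y).PosSemidef) :
    ∀ i, α ≤ μ i ∧ μ i ≤ β := by
  have hUY : Uᵀ * Y * U = Matrix.diagonal μ := by
    rw [hspec]
    simp only [Matrix.mul_assoc]
    rw [hU1, Matrix.mul_one, ← Matrix.mul_assoc, hU1, Matrix.one_mul]
  have key : ∀ (c : ℝ) (Z : Matrix (Fin p) (Fin p) ℝ), Z.PosSemidef →
      (Z = Y - c • 1 ∨ Z = c • 1 - Y) →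
      (∀ i, Z = Y - c • 1 → 0 ≤ μ i - c) ∧ (∀ i, Z = c • 1 - Y → 0 ≤ c - μ i) := by
    intro c Z hZ hcase
    have hc := hZ.conjTranspose_mul_mul_same U
    rw [Matrix.conjTranspose_eq_transpose_of_trivial] at hc
    constructor
    · intro i hZeq
      have : (Uᵀ * Z * U) = Matrix.diagonal (fun j => μ j - c) := by
        rw [hZeq, Matrix.mul_sub, Matrix.sub_mul, Matrix.mul_smul, Matrix.smul_mul,
          Matrix.mul_one, hUY, hU1, Matrix.smul_one_eq_diagonal, ← Matrix.diagonal_sub]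
      rw [this] at hc
      exact Matrix.posSemidef_diagonal_iff.mp hc i
    · intro i hZeq
      have : (Uᵀ * Z * U) = Matrix.diagonal (fun j => c - μ j) := by
        rw [hZeq, Matrix.mul_sub, Matrix.sub_mul, Matrix.mul_smul, Matrix.smul_mul,
          Matrix.mul_one, hUY, hU1, Matrix.smul_one_eq_diagonal, ← Matrix.diagonal_sub]
      rw [this] at hc
      exact Matrix.posSemidef_diagonal_iff.mp hc i
  intro i
  constructor
  · have := ((key α _ h1 (Or.inl rfl)).1 i rfl); linarith
  · have := ((key β _ h2 (Or.inr rfl)).2 i rfl); linarith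

lemma inv_spec {p : ℕ} {Y U : Matrix (Fin p) (Fin p) ℝ} {μ : Fin p → ℝ}
    (hU1 : Uᵀ * U = 1) (hU2 : U * Uᵀ = 1)
    (hspec : Y = U * Matrix.diagonal μ * Uᵀ) (hne : ∀ i, μ i ≠ 0) :
    Y⁻¹ = U * Matrix.diagonal (fun i => (μ i)⁻¹) * Uᵀ := by
  apply Matrix.inv_eq_left_inv
  rw [hspec]
  simp only [Matrix.mul_assoc]
  rw [← Matrix.mul_assoc Uᵀ U, hU1, Matrix.one_mul,
    ← Matrix.mul_assoc (Matrix.diagonal _), Matrix.diagonal_mul_diagonal]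
  have : (fun i => (μ i)⁻¹ * μ i) = fun _ => (1:ℝ) := by
    funext i; exact inv_mul_cancel₀ (hne i)
  rw [this, Matrix.diagonal_one, Matrix.one_mul, hU2]

lemma scalar_bound {τ α β a b : ℝ} (hα : 0 < α) (hαβ : α ≤ β) (hτ0 : 0 < τ)
    (ha1 : α ≤ a) (ha2 : a ≤ β) (hb1 : α ≤ b) (hb2 : b ≤ β) :
    |1 - τ * (a⁻¹ * b⁻¹)| ≤ max |1 - τ / α ^ 2| |1 - τ / β ^ 2| := by
  have ha : 0 < a := lt_of_lt_of_le hα ha1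
  have hb : 0 < b := lt_of_lt_of_le hα hb1
  have hβ : 0 < β := lt_of_lt_of_le hα hαβ
  have h1 : τ * (a⁻¹ * b⁻¹) = τ / (a * b) := by field_simp
  have hab : 0 < a * b := mul_pos ha hb
  have hup : τ / (a * b) ≤ τ / (α * α) :=
    div_le_div_of_nonneg_left hτ0.le (mul_pos hα hα) (mul_le_mul ha1 hb1 hα.le ha.le)
  have hlo : τ / (β * β) ≤ τ / (a * b) :=
    div_le_div_of_nonneg_left hτ0.le hab (mul_le_mul ha2 hb2 hb.le hβ.le)
  rw [h1]
  rw [abs_le]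
  constructor
  · have h2 : τ / α ^ 2 = τ / (α * α) := by rw [sq]
    have := neg_abs_le (1 - τ / α ^ 2)
    have hm := le_max_left |1 - τ / α ^ 2| |1 - τ / β ^ 2|
    nlinarith [hup, this, hm]
  · have h2 : τ / β ^ 2 = τ / (β * β) := by rw [sq]
    have := le_abs_self (1 - τ / β ^ 2)
    have hm := le_max_right |1 - τ / α ^ 2| |1 - τ / β ^ 2|
    nlinarith [hlo, this, hm]

lemma spectral_real {p : ℕ} {Y : Matrix (Fin p) (Fin p) ℝ} (hY : Y.IsHermitian) :
    ∃ (U : Matrix (Fin p) (Fin p) ℝ) (μ : Fin p → ℝ),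
      Uᵀ * U = 1 ∧ U * Uᵀ = 1 ∧ Y = U * Matrix.diagonal μ * Uᵀ ∧
      μ = hY.eigenvalues := by
  refine ⟨(hY.eigenvectorUnitary : Matrix (Fin p) (Fin p) ℝ), hY.eigenvalues, ?_, ?_, ?_, rfl⟩
  · have := Unitary.coe_star_mul_self hY.eigenvectorUnitary
    simpa [Matrix.star_eq_conjTranspose, Matrix.conjTranspose_eq_transpose_of_trivial] using this
  · have := Unitary.coe_mul_star_self hY.eigenvectorUnitary
    simpa [Matrix.star_eq_conjTranspose, Matrix.conjTranspose_eq_transpose_of_trivial] using this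
  · have h := hY.spectral_theorem
    simpa [Matrix.star_eq_conjTranspose, Matrix.conjTranspose_eq_transpose_of_trivial,
      RCLike.ofReal_real_eq_id] using h


theorem gama_linear_contraction {p : ℕ} (hp : 0 < p)
    (S Y Ystar : Matrix (Fin p) (Fin p) ℝ) (hS : S.IsSymm)
    (hY : Y.PosDef) (hYs : Ystar.PosDef)
    (l τ α β : ℝ) (hl : 0 < l) (hα : 0 < α) (hαβ : α ≤ β)
    (hτ0 : 0 < τ) (hτ : τ < α ^ 2)
    (hfix : gamaMap l τ S Ystar = Ystar)
    (hseg : ∀ δ : ℝ, δ ∈ Set.Icc (0 : ℝ) 1 →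
      ((δ • Y + (1 - δ) • Ystar) - α • (1 : Matrix (Fin p) (Fin p) ℝ)).PosSemidef ∧
      (β • (1 : Matrix (Fin p) (Fin p) ℝ) - (δ • Y + (1 - δ) • Ystar)).PosSemidef) :
    ‖gamaMap l τ S Y - Ystar‖ ≤ max |1 - τ / α ^ 2| |1 - τ / β ^ 2| * ‖Y - Ystar‖ ∧
      max |1 - τ / α ^ 2| |1 - τ / β ^ 2| < 1 := by
  have hβ : 0 < β := lt_of_lt_of_le hα hαβ
  set γ : ℝ := max |1 - τ / α ^ 2| |1 - τ / β ^ 2| with hγdef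
  -- γ < 1
  have hγ1 : γ < 1 := by
    have hα2 : (0:ℝ) < α ^ 2 := by positivity
    have hβ2 : (0:ℝ) < β ^ 2 := by positivity
    have hτβ : τ < β ^ 2 := lt_of_lt_of_le hτ (by nlinarith)
    apply max_lt <;> rw [abs_lt] <;> constructor
    · have : τ / α ^ 2 < 1 := (div_lt_one hα2).mpr hτ; linarith
    · have : 0 < τ / α ^ 2 := by positivity
      linarith
    · have : τ / β ^ 2 < 1 := (div_lt_one hβ2).mpr hτβ; linarith
    · have : 0 < τ / β ^ 2 := by positivity
      linarith
  have hγ0 : 0 ≤ γ := le_trans (abs_nonneg _) (le_max_left _ _)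
  -- bounds on Y and Ystar from the segment hypothesis
  have hYb := hseg 1 (by norm_num)
  have hYsb := hseg 0 (by norm_num)
  simp only [one_smul, sub_self, zero_smul, add_zero, sub_zero, zero_add] at hYb hYsb
  -- spectral decompositions
  obtain ⟨U, μ, hU1, hU2, hUspec, -⟩ := spectral_real hY.1
  obtain ⟨V, ν, hV1, hV2, hVspec, -⟩ := spectral_real hYs.1
  have hμ : ∀ i, α ≤ μ i ∧ μ i ≤ β := eig_bounds hU1 hUspec hYb.1 hYb.2
  have hν : ∀ i, α ≤ ν i ∧ ν i ≤ β := eig_bounds hV1 hVspec hYsb.1 hYsb.2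
  have hμ0 : ∀ i, μ i ≠ 0 := fun i => (lt_of_lt_of_le hα (hμ i).1).ne'
  have hν0 : ∀ i, ν i ≠ 0 := fun i => (lt_of_lt_of_le hα (hν i).1).ne'
  have hYinv : Y⁻¹ = U * Matrix.diagonal (fun i => (μ i)⁻¹) * Uᵀ :=
    inv_spec hU1 hU2 hUspec hμ0
  have hYsinv : Ystar⁻¹ = V * Matrix.diagonal (fun i => (ν i)⁻¹) * Vᵀ :=
    inv_spec hV1 hV2 hVspec hν0
  set Δ := Y - Ystar with hΔ
  set M := Uᵀ * Δ * V with hM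
  set X := M - τ • (Matrix.diagonal (fun i => (μ i)⁻¹) * M * Matrix.diagonal (fun i => (ν i)⁻¹))
    with hX
  -- inverse difference identity
  have hYdet : Y⁻¹ * Y = 1 := Matrix.nonsing_inv_mul Y ((Matrix.isUnit_iff_isUnit_det Y).1 hY.isUnit)
  have hYsdet : Ystar * Ystar⁻¹ = 1 :=
    Matrix.mul_nonsing_inv Ystar ((Matrix.isUnit_iff_isUnit_det Ystar).1 hYs.isUnit)
  have hinvdiff : Y⁻¹ * Δ * Ystar⁻¹ = Ystar⁻¹ - Y⁻¹ := by
    rw [hΔ, Matrix.mul_sub, Matrix.sub_mul, hYdet, Matrix.one_mul,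
      Matrix.mul_assoc Y⁻¹ Ystar, hYsdet, Matrix.mul_one]
  -- difference of the nonlinear parts
  have hPQ : (Y + τ • Y⁻¹ - S) - (Ystar + τ • Ystar⁻¹ - S) = Δ - τ • (Y⁻¹ * Δ * Ystar⁻¹) := by
    rw [hinvdiff, hΔ]
    module
  -- unitary conjugation identity
  have e1 : U * M * Vᵀ = Δ := by
    rw [hM]
    simp only [Matrix.mul_assoc]
    rw [hV2, Matrix.mul_one, ← Matrix.mul_assoc, hU2, Matrix.one_mul]
  have e2 : U * (Matrix.diagonal (fun i => (μ i)⁻¹) * M * Matrix.diagonal (fun i => (ν i)⁻¹)) * Vᵀ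
      = Y⁻¹ * Δ * Ystar⁻¹ := by
    rw [hYinv, hYsinv, hM]
    simp only [Matrix.mul_assoc]
  have e3 : U * X * Vᵀ = Δ - τ • (Y⁻¹ * Δ * Ystar⁻¹) := by
    rw [hX, Matrix.mul_sub, Matrix.sub_mul, Matrix.mul_smul, Matrix.smul_mul, e1, e2]
  -- norm identities
  have hnX : ‖U * X * Vᵀ‖ = ‖X‖ := by
    rw [frob_unitary_right _ _ (by rw [Matrix.transpose_transpose, hV1] : Vᵀ * Vᵀᵀ = 1),
      frob_unitary_left _ _ hU1]
  have hnM : ‖M‖ = ‖Δ‖ := by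
    rw [hM, frob_unitary_right _ _ hV2,
      frob_unitary_left _ _ (by rw [Matrix.transpose_transpose, hU2] : Uᵀᵀ * Uᵀ = 1)]
  -- the entrywise contraction on X
  have hXM : ‖X‖ ≤ γ * ‖M‖ := by
    have : ‖X‖ ≤ ‖γ • M‖ := by
      apply frob_mono
      intro i j
      have hXij : X i j = M i j * (1 - τ * ((μ i)⁻¹ * (ν j)⁻¹)) := by
        rw [hX, Matrix.sub_apply, Matrix.smul_apply, Matrix.mul_diagonal,
          Matrix.diagonal_mul, smul_eq_mul]
        ring
      rw [hXij]
      have hsb := scalar_bound hα hαβ hτ0 (hμ i).1 (hμ i).2 (hν j).1 (hν j).2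
      have : |M i j * (1 - τ * ((μ i)⁻¹ * (ν j)⁻¹))| ≤ |M i j| * γ := by
        rw [abs_mul]
        exact mul_le_mul_of_nonneg_left hsb (abs_nonneg _)
      calc |M i j * (1 - τ * ((μ i)⁻¹ * (ν j)⁻¹))| ≤ |M i j| * γ := this
        _ = |(γ • M) i j| := by
            rw [Matrix.smul_apply, smul_eq_mul, abs_mul, abs_of_nonneg hγ0, mul_comm]
    calc ‖X‖ ≤ ‖γ • M‖ := this
      _ = γ * ‖M‖ := frob_smul γ M hγ0
  -- entrywise clip bound
  refine ⟨?_, hγ1⟩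
  have hclip : ‖gamaMap l τ S Y - Ystar‖ ≤ ‖(Y + τ • Y⁻¹ - S) - (Ystar + τ • Ystar⁻¹ - S)‖ := by
    apply frob_mono
    intro i j
    have hYstar : Ystar i j = clip l ((Ystar + τ • Ystar⁻¹ - S) i j) + S i j := by
      conv_lhs => rw [← hfix]
      rfl
    have : (gamaMap l τ S Y - Ystar) i j
        = clip l ((Y + τ • Y⁻¹ - S) i j) - clip l ((Ystar + τ • Ystar⁻¹ - S) i j) := by
      rw [Matrix.sub_apply, hYstar]
      simp [gamaMap]
    rw [this, Matrix.sub_apply]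
    exact clip_lip _ _ _
  calc ‖gamaMap l τ S Y - Ystar‖
      ≤ ‖(Y + τ • Y⁻¹ - S) - (Ystar + τ • Ystar⁻¹ - S)‖ := hclip
    _ = ‖U * X * Vᵀ‖ := by rw [hPQ, ← e3]
    _ = ‖X‖ := hnX
    _ ≤ γ * ‖M‖ := hXM
    _ = γ * ‖Y - Ystar‖ := by rw [hnM]
end

section
/- For a symmetric positive definite matrix Y and symmetric matrix S with ‖Y − S‖_∞ ≤ λ (entrywise max bound) and any X ∈ S₊₊^p, the duality gap satisfies −log det Y − p + (−log det X + ⟨S, X⟩ + λ‖X‖₁) ≥ 0, with equality if and only if Y = X⁻¹ and the optimality conditions hold. In particular, the weaker statement: −log det Y − p − log det X + ⟨X, Y⟩ ≥ 0 for all X, Y ∈ S₊₊^p, with equality iff Y = X⁻¹. -/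
open Matrix

lemma posDef_conj_herm {n : ℕ} {A B : Matrix (Fin n) (Fin n) ℝ} (hB : B.PosDef)
    (hA : IsUnit A.det) : (Aᴴ * B * A).PosDef := by
  refine Matrix.PosDef.of_dotProduct_mulVec_pos (Matrix.isHermitian_conjTranspose_mul_mul A hB.1) fun x hx => ?_
  have h : A *ᵥ x ≠ 0 := by
    intro h
    apply hx
    have := congrArg (fun y => A⁻¹ *ᵥ y) h
    simpa [Matrix.mulVec_mulVec, Matrix.nonsing_inv_mul A hA] using this
  simpa only [star_mulVec, dotProduct_mulVec, vecMul_vecMul] using hB.dotProduct_mulVec_pos h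

lemma gap_aux {p : ℕ} {M : Matrix (Fin p) (Fin p) ℝ} (hM : M.PosDef) :
    (0 : ℝ) ≤ M.trace - Real.log M.det - p ∧
    (M.trace - Real.log M.det - p = 0 ↔ M = 1) := by
  have he := hM.isHermitian
  have hpos := hM.eigenvalues_pos
  have hU : (he.eigenvectorUnitary : Matrix (Fin p) (Fin p) ℝ) *
      star (he.eigenvectorUnitary : Matrix (Fin p) (Fin p) ℝ) = 1 :=
    Matrix.mem_unitaryGroup_iff.mp he.eigenvectorUnitary.2
  have htr : M.trace = ∑ i, he.eigenvalues i := by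
    conv_lhs => rw [he.spectral_theorem, Unitary.conjStarAlgAut_apply]
    rw [Matrix.trace_mul_cycle]
    rw [Matrix.mem_unitaryGroup_iff'.mp he.eigenvectorUnitary.2, Matrix.one_mul,
      Matrix.trace_diagonal]
    simp
  have hdet : Real.log M.det = ∑ i, Real.log (he.eigenvalues i) := by
    rw [he.det_eq_prod_eigenvalues]
    push_cast
    exact Real.log_prod fun i _ => (hpos i).ne'
  have key : M.trace - Real.log M.det - p = ∑ i, (he.eigenvalues i - Real.log (he.eigenvalues i) - 1) := by
    rw [htr, hdet, Finset.sum_sub_distrib, Finset.sum_sub_distrib]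
    simp
  have hterm : ∀ i, 0 ≤ he.eigenvalues i - Real.log (he.eigenvalues i) - 1 := fun i => by
    have := Real.log_le_sub_one_of_pos (hpos i); linarith
  constructor
  · rw [key]; exact Finset.sum_nonneg fun i _ => hterm i
  constructor
  · intro h
    rw [key] at h
    have hall : ∀ i ∈ Finset.univ, he.eigenvalues i - Real.log (he.eigenvalues i) - 1 = 0 :=
      (Finset.sum_eq_zero_iff_of_nonneg (fun i _ => hterm i)).mp h
    have hone : ∀ i, he.eigenvalues i = 1 := by
      intro i
      by_contra hne
      have := Real.log_lt_sub_one_of_pos (hpos i) hne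
      have := hall i (Finset.mem_univ i)
      linarith
    rw [he.spectral_theorem, Unitary.conjStarAlgAut_apply]
    have : Matrix.diagonal (RCLike.ofReal ∘ he.eigenvalues) = (1 : Matrix (Fin p) (Fin p) ℝ) := by
      ext i j
      by_cases hij : i = j <;> simp [Matrix.diagonal_apply, Matrix.one_apply, hij, hone]
    rw [this, Matrix.mul_one, hU]
  · rintro rfl
    simp [Matrix.trace_one]

open scoped MatrixOrder in
lemma key_gap {p : ℕ} (X Y : Matrix (Fin p) (Fin p) ℝ) (hX : X.PosDef) (hY : Y.PosDef) :
    0 ≤ -Real.log Y.det - p - Real.log X.det + (X * Y).trace ∧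
    (-Real.log Y.det - p - Real.log X.det + (X * Y).trace = 0 ↔ Y = X⁻¹) := by
  set Q := CFC.sqrt X with hQdef
  have hQs : Q * Q = X := CFC.sqrt_mul_sqrt_self X (Matrix.nonneg_iff_posSemidef.mpr hX.posSemidef)
  have hQh : Qᴴ = Q := (Matrix.nonneg_iff_posSemidef.mp (CFC.sqrt_nonneg X)).isHermitian
  have hdetQ : IsUnit Q.det := by
    have h2 : Q.det * Q.det = X.det := by rw [← Matrix.det_mul, hQs]
    have : Q.det ≠ 0 := by
      intro h; rw [h, mul_zero] at h2; exact hX.det_pos.ne (h2)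
    exact this.isUnit
  have hM : (Q * Y * Q).PosDef := by
    have := posDef_conj_herm hY hdetQ
    rwa [hQh] at this
  have htr : (Q * Y * Q).trace = (X * Y).trace := by
    rw [Matrix.trace_mul_cycle, hQs]
  have hdet : (Q * Y * Q).det = X.det * Y.det := by
    rw [Matrix.det_mul, Matrix.det_mul, mul_comm Q.det Y.det, mul_assoc,
      ← Matrix.det_mul, hQs, mul_comm]
  have hlog : Real.log (Q * Y * Q).det = Real.log X.det + Real.log Y.det := by
    rw [hdet, Real.log_mul hX.det_pos.ne' hY.det_pos.ne']
  have heq : (Q * Y * Q).trace - Real.log (Q * Y * Q).det - p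
      = -Real.log Y.det - p - Real.log X.det + (X * Y).trace := by
    rw [htr, hlog]; ring
  obtain ⟨h1, h2⟩ := gap_aux hM
  rw [heq] at h1 h2
  refine ⟨h1, h2.trans ?_⟩
  constructor
  · intro h
    have : Q⁻¹ * (Q * Y * Q) * Q⁻¹ = Q⁻¹ * Q⁻¹ := by rw [h, Matrix.mul_one]
    rw [← Matrix.mul_assoc, ← Matrix.mul_assoc, Matrix.nonsing_inv_mul Q hdetQ,
      Matrix.one_mul, Matrix.mul_assoc, Matrix.mul_nonsing_inv Q hdetQ,
      Matrix.mul_one] at this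
    rw [this, ← Matrix.mul_inv_rev, hQs]
  · rintro rfl
    have hinv : X⁻¹ = Q⁻¹ * Q⁻¹ := by rw [← hQs, Matrix.mul_inv_rev]
    calc Q * X⁻¹ * Q = Q * Q⁻¹ * (Q⁻¹ * Q) := by rw [hinv]; simp only [Matrix.mul_assoc]
      _ = 1 := by
          rw [Matrix.mul_nonsing_inv Q hdetQ, Matrix.nonsing_inv_mul Q hdetQ, Matrix.one_mul]

theorem duality_gap_nonneg {p : ℕ} (X Y S : Matrix (Fin p) (Fin p) ℝ)
    (hX : X.PosDef) (hY : Y.PosDef) (hS : S.IsSymm)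
    (l : ℝ) (hl : 0 < l) (hfeas : ∀ i j, |Y i j - S i j| ≤ l) :
    (0 ≤ -Real.log Y.det - p +
        (-Real.log X.det + (S * X).trace + l * ∑ i, ∑ j, |X i j|)) ∧
    (∀ X' Y' : Matrix (Fin p) (Fin p) ℝ, X'.PosDef → Y'.PosDef →
      0 ≤ -Real.log Y'.det - p - Real.log X'.det + (X' * Y').trace ∧
      (-Real.log Y'.det - p - Real.log X'.det + (X' * Y').trace = 0 ↔
        Y' = X'⁻¹)) := by
  refine ⟨?_, fun X' Y' hX' hY' => key_gap X' Y' hX' hY'⟩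
  have hkey := (key_gap X Y hX hY).1
  have hbound : (X * Y).trace ≤ (S * X).trace + l * ∑ i, ∑ j, |X i j| := by
    have h1 : (X * Y).trace = (Y * X).trace := Matrix.trace_mul_comm X Y
    have h2 : (S * X).trace - (Y * X).trace = ∑ i, ∑ j, (S i j - Y i j) * X j i := by
      simp only [Matrix.trace, Matrix.diag, Matrix.mul_apply, ← Finset.sum_sub_distrib, sub_mul]
    have h3 : ∀ i j, -(l * |X j i|) ≤ (S i j - Y i j) * X j i := by
      intro i j
      have habs : |(S i j - Y i j) * X j i| ≤ l * |X j i| := by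
        rw [abs_mul]
        have := hfeas i j
        rw [abs_sub_comm] at this
        exact mul_le_mul_of_nonneg_right this (abs_nonneg _)
      linarith [neg_abs_le ((S i j - Y i j) * X j i)]
    have h4 : -(l * ∑ i, ∑ j, |X i j|) ≤ ∑ i, ∑ j, (S i j - Y i j) * X j i := by
      have : ∑ i, ∑ j, |X i j| = ∑ i, ∑ j, |X j i| := Finset.sum_comm
      rw [this, Finset.mul_sum, ← Finset.sum_neg_distrib]
      refine Finset.sum_le_sum fun i _ => ?_
      rw [Finset.mul_sum, ← Finset.sum_neg_distrib]
      exact Finset.sum_le_sum fun j _ => h3 i j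
    linarith [h2 ▸ h4, h1]
  linarith
end

section
/- Fixed point characterization: let S be symmetric, λ, τ > 0, and X* ∈ S₊₊^p. Then X* satisfies the entrywise optimality conditions — X*(i,j) = 0 implies |S(i,j) − (X*⁻¹)(i,j)| ≤ λ, and X*(i,j) ≠ 0 implies S(i,j) − (X*⁻¹)(i,j) = −λ·sign(X*(i,j)) — if and only if Y* = X*⁻¹ satisfies Y* = C_λ(τY*⁻¹ + Y* − S) + S entrywise, where C_λ is the clip to [−λ, λ]. -/
lemma clip_key (l τ a d : ℝ) (hl : 0 < l) (hτ : 0 < τ) :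
    ((a = 0 → |d| ≤ l) ∧ (a ≠ 0 → d = l * Real.sign a)) ↔
      d = clip l (τ * a + d) := by
  unfold clip
  rcases lt_trichotomy a 0 with h | h | h
  · rw [Real.sign_of_neg h]
    have hτa : τ * a < 0 := mul_neg_of_pos_of_neg hτ h
    constructor
    · rintro ⟨-, h2⟩
      have hd : d = -l := by rw [h2 h.ne]; ring
      subst hd
      rw [max_eq_right (by linarith), min_eq_left (by linarith)]
    · intro hd
      refine ⟨fun h0 => absurd h0 h.ne, fun _ => ?_⟩
      rcases le_or_gt (τ * a + d) (-l) with hc | hc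
      · rw [max_eq_right hc, min_eq_left (by linarith)] at hd
        linarith [hd]
      · rw [max_eq_left hc.le] at hd
        rcases le_or_gt (τ * a + d) l with hc2 | hc2
        · rw [min_eq_left hc2] at hd; linarith
        · rw [min_eq_right hc2.le] at hd; linarith
  · subst h
    simp only [mul_zero, zero_add, ne_eq, not_true_eq_false, IsEmpty.forall_iff,
      and_true, forall_const]
    constructor
    · intro habs
      rw [abs_le] at habs
      rw [max_eq_left (by linarith), min_eq_left (by linarith)]
    · intro hd
      rcases le_or_gt d (-l) with hc | hc
      · rw [max_eq_right hc, min_eq_left (by linarith)] at hd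
        rw [hd]; rw [abs_le]; constructor <;> linarith
      · rw [max_eq_left hc.le] at hd
        rcases le_or_gt d l with hc2 | hc2
        · rw [abs_le]; constructor <;> linarith
        · rw [min_eq_right hc2.le] at hd; linarith
  · rw [Real.sign_of_pos h]
    have hτa : 0 < τ * a := mul_pos hτ h
    constructor
    · rintro ⟨-, h2⟩
      have hd : d = l := by rw [h2 h.ne']; ring
      subst hd
      rw [min_eq_right (le_max_of_le_left (by linarith))]
    · intro hd
      refine ⟨fun h0 => absurd h0 h.ne', fun _ => ?_⟩
      rcases le_or_gt l (τ * a + d) with hc | hc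
      · rw [min_eq_right (le_max_of_le_left hc)] at hd; linarith
      · rcases le_or_gt (τ * a + d) (-l) with hc2 | hc2
        · rw [max_eq_right hc2, min_eq_left (by linarith)] at hd; linarith
        · rw [max_eq_left hc2.le, min_eq_left hc.le] at hd; linarith

theorem fixed_point_characterization {p : ℕ}
    (Xstar S : Matrix (Fin p) (Fin p) ℝ) (hX : Xstar.PosDef) (hS : S.IsSymm)
    (l τ : ℝ) (hl : 0 < l) (hτ : 0 < τ) :
    ((∀ i j, (Xstar i j = 0 → |S i j - Xstar⁻¹ i j| ≤ l) ∧
        (Xstar i j ≠ 0 → S i j - Xstar⁻¹ i j = -l * Real.sign (Xstar i j))) ↔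
      (∀ i j, Xstar⁻¹ i j =
        clip l (τ * Xstar i j + (Xstar⁻¹ i j - S i j)) + S i j)) := by
  have key : ∀ i j,
      ((Xstar i j = 0 → |S i j - Xstar⁻¹ i j| ≤ l) ∧
        (Xstar i j ≠ 0 → S i j - Xstar⁻¹ i j = -l * Real.sign (Xstar i j))) ↔
      (Xstar⁻¹ i j = clip l (τ * Xstar i j + (Xstar⁻¹ i j - S i j)) + S i j) := by
    intro i j
    have := clip_key l τ (Xstar i j) (Xstar⁻¹ i j - S i j) hl hτ
    constructor
    · rintro ⟨h1, h2⟩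
      have : Xstar⁻¹ i j - S i j = clip l (τ * Xstar i j + (Xstar⁻¹ i j - S i j)) := by
        rw [← this]
        refine ⟨fun h0 => ?_, fun h0 => ?_⟩
        · have := h1 h0; rwa [abs_sub_comm] at this
        · have := h2 h0; linarith
      linarith
    · intro h
      have hd : Xstar⁻¹ i j - S i j = clip l (τ * Xstar i j + (Xstar⁻¹ i j - S i j)) := by
        linarith
      have hlhs := this.mpr hd
      refine ⟨fun h0 => ?_, fun h0 => ?_⟩
      · have := hlhs.1 h0; rwa [abs_sub_comm]
      · have := hlhs.2 h0; linarith
  exact forall₂_congr key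
end

section
/- For t > 0 the map t ↦ C_λ(τ/t + t − s) + s (with C_λ the clip to [−λ,λ], τ > 0, s ∈ ℝ, λ > 0) restricted to t ∈ [α, β] with 0 < α ≤ β and τ < α² is a contraction with Lipschitz constant max(|1 − τ/α²|, |1 − τ/β²|) < 1 (the scalar, p=1 case of G-AMA convergence). -/
lemma clip_lipschitz (l a b : ℝ) : |clip l a - clip l b| ≤ |a - b| := by
  unfold clip
  calc |min (max a (-l)) l - min (max b (-l)) l|
      ≤ max |max a (-l) - max b (-l)| |l - l| := abs_min_sub_min_le_max _ _ _ _
    _ = |max a (-l) - max b (-l)| := by simp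
    _ ≤ |a - b| := abs_max_sub_max_le_abs _ _ _

theorem scalar_gama_contraction (l τ s α β : ℝ) (hl : 0 < l) (hτ0 : 0 < τ)
    (hα : 0 < α) (hαβ : α ≤ β) (hτ : τ < α ^ 2) :
    (∀ t₁ ∈ Set.Icc α β, ∀ t₂ ∈ Set.Icc α β,
      |(clip l (τ / t₁ + t₁ - s) + s) - (clip l (τ / t₂ + t₂ - s) + s)| ≤
        max |1 - τ / α ^ 2| |1 - τ / β ^ 2| * |t₁ - t₂|) ∧
    max |1 - τ / α ^ 2| |1 - τ / β ^ 2| < 1 := by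
  have hβ : 0 < β := lt_of_lt_of_le hα hαβ
  have hα2 : (0:ℝ) < α ^ 2 := by positivity
  have hβ2 : (0:ℝ) < β ^ 2 := by positivity
  have hαβ2 : α ^ 2 ≤ β ^ 2 := by nlinarith
  have h1 : (0:ℝ) ≤ 1 - τ / α ^ 2 := by
    rw [sub_nonneg, div_le_one hα2]; linarith
  have h2 : (0:ℝ) ≤ 1 - τ / β ^ 2 := by
    rw [sub_nonneg, div_le_one hβ2]
    calc τ ≤ α ^ 2 := le_of_lt hτ
      _ ≤ β ^ 2 := hαβ2
  have hle : 1 - τ / α ^ 2 ≤ 1 - τ / β ^ 2 := by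
    have : τ / β ^ 2 ≤ τ / α ^ 2 := div_le_div_of_nonneg_left (le_of_lt hτ0) hα2 hαβ2
    linarith
  have hmax : max |1 - τ / α ^ 2| |1 - τ / β ^ 2| = 1 - τ / β ^ 2 := by
    rw [abs_of_nonneg h1, abs_of_nonneg h2, max_eq_right hle]
  constructor
  · intro t₁ ht₁ t₂ ht₂
    obtain ⟨h1a, h1b⟩ := ht₁
    obtain ⟨h2a, h2b⟩ := ht₂
    have ht₁0 : 0 < t₁ := lt_of_lt_of_le hα h1a
    have ht₂0 : 0 < t₂ := lt_of_lt_of_le hα h2a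
    have key : |(clip l (τ / t₁ + t₁ - s) + s) - (clip l (τ / t₂ + t₂ - s) + s)| ≤
        |(τ / t₁ + t₁ - s) - (τ / t₂ + t₂ - s)| := by
      have := clip_lipschitz l (τ / t₁ + t₁ - s) (τ / t₂ + t₂ - s)
      calc |(clip l (τ / t₁ + t₁ - s) + s) - (clip l (τ / t₂ + t₂ - s) + s)|
          = |clip l (τ / t₁ + t₁ - s) - clip l (τ / t₂ + t₂ - s)| := by ring_nf
        _ ≤ _ := this
    have heq : (τ / t₁ + t₁ - s) - (τ / t₂ + t₂ - s) = (1 - τ / (t₁ * t₂)) * (t₁ - t₂) := by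
      field_simp
      ring
    have hprod : α ^ 2 ≤ t₁ * t₂ := by nlinarith
    have hprod0 : 0 < t₁ * t₂ := mul_pos ht₁0 ht₂0
    have hfac0 : (0:ℝ) ≤ 1 - τ / (t₁ * t₂) := by
      rw [sub_nonneg, div_le_one hprod0]; linarith
    have hfacle : 1 - τ / (t₁ * t₂) ≤ 1 - τ / β ^ 2 := by
      have hub : t₁ * t₂ ≤ β ^ 2 := by nlinarith
      have : τ / β ^ 2 ≤ τ / (t₁ * t₂) := div_le_div_of_nonneg_left (le_of_lt hτ0) hprod0 hub
      linarith
    calc |(clip l (τ / t₁ + t₁ - s) + s) - (clip l (τ / t₂ + t₂ - s) + s)|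
        ≤ |(τ / t₁ + t₁ - s) - (τ / t₂ + t₂ - s)| := key
      _ = |1 - τ / (t₁ * t₂)| * |t₁ - t₂| := by rw [heq, abs_mul]
      _ ≤ max |1 - τ / α ^ 2| |1 - τ / β ^ 2| * |t₁ - t₂| := by
          rw [hmax]
          apply mul_le_mul_of_nonneg_right _ (abs_nonneg _)
          rw [abs_of_nonneg hfac0]; exact hfacle
  · rw [hmax]
    have : 0 < τ / β ^ 2 := div_pos hτ0 hβ2
    linarith
end
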